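/- For all integers n ≥ 2 and i ≥ 1, the generalized Fibonacci sequence satisfies U_{ni+i} = V_i^{n−1} · U_{2i} − (−q)^i · Σ_{j=1}^{n−1} V_i^{n−1−j} · U_{ij}, where V is the generalized Lucas sequence with the same parameters p, q. -/

import Mathlib

/-- Generalized Fibonacci: U_{ni+i} = V_i^{n−1} · U_{2i} − (−q)^i · Σ_{j=1}^{n−1} V_i^{n−1−j} · U_{ij}. -/
theorem genFib_sum (p q : ℤ) (U V : ℕ → ℤ)
    (hU0 : U 0 = 0) (hU1 : U 1 = 1)
    (hU : ∀ n : ℕ, U (n + 2) = p * U (n + 1) + q * U n)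
    (hV0 : V 0 = 2) (hV1 : V 1 = p)
    (hV : ∀ n : ℕ, V (n + 2) = p * V (n + 1) + q * V n)
    (n i : ℕ) (hn : 2 ≤ n) (hi : 1 ≤ i) :
    U (n * i + i) = V i ^ (n - 1) * U (2 * i) -
      (-q) ^ i * ∑ j ∈ Finset.Icc 1 (n - 1), V i ^ (n - 1 - j) * U (i * j) := by
  -- d'Ocagne-type identity
  have C : ∀ t k : ℕ, U (t+1) * U (t+k) - U t * U (t+k+1) = (-q)^t * U k := by
    intro t
    induction t with
    | zero => intro k; simp [hU0, hU1]
    | succ t ih =>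
      intro k
      have e1 : t + 1 + k = t + k + 1 := by omega
      have e2 : t + k + 1 + 1 = t + k + 2 := by omega
      have e3 : t + 1 + 1 = t + 2 := by omega
      rw [e1, e2, e3]
      have h1 := hU (t+k)
      have h2 := hU t
      linear_combination U (t+k+1) * h2 - U (t+1) * h1 - q * (ih k)
  -- addition formula
  have A : ∀ a b : ℕ, U (a+b+1) = U (a+1) * U (b+1) + q * U a * U b := by
    intro a b
    induction b using Nat.twoStepInduction with
    | zero => simp [hU0, hU1]
    | one =>
      have h2 : U 2 = p := by
        have h := hU 0
        norm_num at h
        rw [hU1, hU0] at h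
        linarith
      have e1 : a + 1 + 1 = a + 2 := by omega
      rw [e1, hU1]
      norm_num [h2, hU a]
      ring
    | more b ih0 ih1 =>
      have e1 : a + (b+1) + 1 = a + b + 2 := by omega
      have e2 : a + (b+2) + 1 = a + b + 1 + 2 := by omega
      have e3 : b + 1 + 1 = b + 2 := by omega
      have e4 : b + 2 + 1 = b + 1 + 2 := by omega
      rw [e1] at ih1
      rw [e2, e3, e4]
      linear_combination hU (a+b+1) + p * ih1 + q * ih0 - U (a+1) * hU (b+1) - q * U a * hU b
  -- V in terms of U
  have B : ∀ b : ℕ, V (b+1) = U (b+2) + q * U b := by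
    intro b
    induction b using Nat.twoStepInduction with
    | zero =>
      rw [hV1, hU0, hU 0, hU1, hU0]; ring
    | one =>
      have e1 : (1:ℕ) + 1 = 0 + 2 := by omega
      have e2 : (1:ℕ) + 2 = 1 + 2 := by omega
      rw [e1, hV 0, hV1, hV0, hU 1, hU 0, hU1, hU0]; ring
    | more b ih0 ih1 =>
      have e1 : b + 2 + 1 = b + 1 + 2 := by omega
      have e2 : b + 2 + 2 = b + 2 + 2 := rfl
      rw [e1, hV (b+1)]
      have e3 : b + 1 + 1 = b + 2 := by omega
      rw [e3] at ih1
      linear_combination p * ih1 + q * ih0 - hU (b+2) - q * hU b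
  -- key identity: U(2i + k) = V i * U (i+k) - (-q)^i * U k, i = t+1
  have K : ∀ t k : ℕ, U (2*t + 2 + k) = V (t+1) * U (t+1+k) - (-q)^(t+1) * U k := by
    intro t k
    have lA := A (t+1) (t+k)
    have lB := B t
    have lC := C t k
    have e1 : t + 1 + (t + k) + 1 = 2*t + 2 + k := by omega
    have e2 : t + k + 1 = t + 1 + k := by omega
    have e3 : t + 1 + 1 = t + 2 := by omega
    rw [e1, e2, e3] at lA
    rw [e2] at lC
    linear_combination lA - U (t+1+k) * lB + q * lC
  obtain ⟨t, rfl⟩ : ∃ t, i = t + 1 := ⟨i - 1, by omega⟩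
  induction n, hn using Nat.le_induction with
  | base =>
    have k := K t (t+1)
    have e1 : 2 * (t+1) + (t+1) = 2*t + 2 + (t+1) := by omega
    have e2 : 2 * (t+1) = t + 1 + (t+1) := by omega
    rw [e1, e2, k]
    simp [Finset.Icc_self]
  | succ n hn2 ih =>
    obtain ⟨m, rfl⟩ : ∃ m, n = m + 1 := ⟨n - 1, by omega⟩
    have k := K t ((m+1) * (t+1))
    have e1 : (m + 1 + 1) * (t+1) + (t+1) = 2*t + 2 + (m+1)*(t+1) := by ring
    have e2 : t + 1 + (m+1)*(t+1) = (m+1) * (t+1) + (t+1) := by ring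
    rw [e2] at k
    rw [e1, k, ih]
    have e3 : m + 1 - 1 = m := by omega
    have e4 : m + 1 + 1 - 1 = m + 1 := by omega
    rw [e3] at *
    rw [e4]
    have hsum : ∑ j ∈ Finset.Icc 1 (m+1), V (t+1) ^ (m+1-j) * U ((t+1)*j)
        = V (t+1) * ∑ j ∈ Finset.Icc 1 m, V (t+1) ^ (m-j) * U ((t+1)*j)
          + U ((t+1)*(m+1)) := by
      rw [Finset.sum_Icc_succ_top (by omega : 1 ≤ m + 1), Finset.mul_sum]
      simp only [Nat.sub_self, pow_zero, one_mul]
      congr 1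
      apply Finset.sum_congr rfl
      intro j hj
      simp only [Finset.mem_Icc] at hj
      have : m + 1 - j = (m - j) + 1 := by omega
      rw [this, pow_succ]
      ring
    rw [hsum]
    have e5 : U ((m+1)*(t+1)) = U ((t+1)*(m+1)) := by rw [mul_comm]
    rw [e5, pow_succ]
    ring
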